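/- Let c ≥ τ*. Define the decision rule δ*(y) = exp(2τ*y)/(exp(2τ*y)+1). Then δ* is minimax optimal for mean square regret in the one-dimensional Gaussian problem with parameter space [−c,c]: for every measurable rule δ : ℝ → [0,1] one has sup_{τ∈[−c,c]} R(δ,τ) ≥ sup_{τ∈[−c,c]} R(δ*,τ), and moreover sup_{τ∈[−c,c]} R(δ*,τ) = (τ*)² ρ(τ*). -/

import Mathlib

open Real MeasureTheory

/-- The standard normal density. -/
noncomputable def gaussPdf (x : ℝ) : ℝ :=
  (Real.sqrt (2 * Real.pi))⁻¹ * Real.exp (-(x ^ 2) / 2)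

/-- ρ(a) = ∫ (1/(exp(2a·y)+1))² φ(y−a) dy. -/
noncomputable def ρ (a : ℝ) : ℝ :=
  ∫ y : ℝ, (1 / (Real.exp (2 * a * y) + 1)) ^ 2 * gaussPdf (y - a)

/-- Mean square regret of a rule δ at parameter τ in the one-dimensional Gaussian
problem with unit variance. -/
noncomputable def R (δ : ℝ → ℝ) (τ : ℝ) : ℝ :=
  τ ^ 2 * ∫ y : ℝ, ((if 0 ≤ τ then (1 : ℝ) else 0) - δ y) ^ 2 * gaussPdf (y - τ)

namespace MMX

/-- logistic-type weight -/
noncomputable def sg (t y : ℝ) : ℝ := Real.exp (2 * t * y) / (Real.exp (2 * t * y) + 1)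

noncomputable def qq (t y : ℝ) : ℝ := (1 / (Real.exp (2 * t * y) + 1)) ^ 2

noncomputable def Gg (t τ : ℝ) : ℝ := ∫ y : ℝ, qq t y * gaussPdf (y - τ)

noncomputable def Aa (t τ : ℝ) : ℝ := ∫ y : ℝ, sg t y * qq t y * gaussPdf (y - τ)

lemma rho_eq (a : ℝ) : ρ a = Gg a a := rfl

lemma gaussPdf_pos (x : ℝ) : 0 < gaussPdf x := by
  have h : 0 < Real.sqrt (2 * Real.pi) := Real.sqrt_pos.2 (by positivity)
  exact mul_pos (inv_pos.2 h) (Real.exp_pos _)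

lemma gaussPdf_nonneg (x : ℝ) : 0 ≤ gaussPdf x := (gaussPdf_pos x).le

lemma continuous_gaussPdf : Continuous gaussPdf := by
  unfold gaussPdf
  fun_prop

lemma gaussPdf_eq (x : ℝ) : gaussPdf x = (Real.sqrt (2 * Real.pi))⁻¹ * Real.exp (-(1/2) * x ^ 2) := by
  rw [gaussPdf]; ring_nf

lemma integrable_gaussPdf : Integrable gaussPdf := by
  have : (fun x => gaussPdf x) = fun x => (Real.sqrt (2 * Real.pi))⁻¹ * Real.exp (-(1/2) * x ^ 2) := by
    funext x; exact gaussPdf_eq x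
  rw [show gaussPdf = fun x => gaussPdf x from rfl, this]
  exact (integrable_exp_neg_mul_sq (by norm_num)).const_mul _

lemma integral_gaussPdf : ∫ x, gaussPdf x = 1 := by
  have h : (fun x => gaussPdf x) = fun x => (Real.sqrt (2 * Real.pi))⁻¹ * Real.exp (-(1/2) * x ^ 2) := by
    funext x; exact gaussPdf_eq x
  rw [show gaussPdf = fun x => gaussPdf x from rfl, h, MeasureTheory.integral_const_mul,
    integral_gaussian]
  rw [show π / (1/2) = 2 * π by ring]
  rw [inv_mul_cancel₀]
  exact Real.sqrt_ne_zero'.2 (by positivity)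

lemma integrable_gauss_shift (a : ℝ) : Integrable (fun y => gaussPdf (y - a)) :=
  integrable_gaussPdf.comp_sub_right a

lemma integrable_abs_gauss : Integrable (fun z => |z| * gaussPdf z) := by
  apply Integrable.mono' ((integrable_exp_neg_mul_sq (show (0:ℝ) < 1/4 by norm_num)).const_mul
    ((Real.sqrt (2 * Real.pi))⁻¹))
  · exact (continuous_abs.mul continuous_gaussPdf).aestronglyMeasurable
  · refine Filter.Eventually.of_forall fun z => ?_
    rw [Real.norm_eq_abs, abs_of_nonneg (mul_nonneg (abs_nonneg z) (gaussPdf_nonneg z))]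
    rw [gaussPdf]
    have h1 : |z| ≤ Real.exp ((1/4) * z ^ 2) := by
      have := Real.add_one_le_exp ((1/4) * z ^ 2)
      nlinarith [sq_nonneg (|z| - 2), sq_abs z, abs_nonneg z]
    have h2 : (0:ℝ) < (Real.sqrt (2 * Real.pi))⁻¹ := by
      have : 0 < Real.sqrt (2 * Real.pi) := Real.sqrt_pos.2 (by positivity)
      positivity
    calc |z| * ((Real.sqrt (2 * Real.pi))⁻¹ * Real.exp (-(z ^ 2) / 2))
        ≤ Real.exp ((1/4) * z ^ 2) * ((Real.sqrt (2 * Real.pi))⁻¹ * Real.exp (-(z ^ 2) / 2)) := by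
          apply mul_le_mul_of_nonneg_right h1 (by positivity)
      _ = (Real.sqrt (2 * Real.pi))⁻¹ * Real.exp (-(1/4) * z ^ 2) := by
          rw [mul_comm, mul_assoc, ← Real.exp_add]; ring_nf

/-- shift identity -/
lemma shift (f : ℝ → ℝ) (a : ℝ) :
    ∫ z : ℝ, f (z + a) * gaussPdf z = ∫ y : ℝ, f y * gaussPdf (y - a) := by
  calc ∫ z : ℝ, f (z + a) * gaussPdf z
      = ∫ z : ℝ, f (z + a) * gaussPdf ((z + a) - a) := by simp
    _ = ∫ y : ℝ, f y * gaussPdf (y - a) :=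
        integral_add_right_eq_self (fun y => f y * gaussPdf (y - a)) a

lemma E_pos (t y : ℝ) : 0 < Real.exp (2 * t * y) := Real.exp_pos _

lemma E1_pos (t y : ℝ) : 0 < Real.exp (2 * t * y) + 1 := by positivity

lemma qq_pos (t y : ℝ) : 0 < qq t y := by
  rw [qq]; positivity

lemma qq_le_one (t y : ℝ) : qq t y ≤ 1 := by
  rw [qq]
  have h := E_pos t y
  rw [pow_two]
  have h1 : (1:ℝ) / (Real.exp (2 * t * y) + 1) ≤ 1 := by
    rw [div_le_one (E1_pos t y)]; linarith
  have h0 : (0:ℝ) ≤ 1 / (Real.exp (2 * t * y) + 1) := by positivity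
  nlinarith

lemma sg_nonneg (t y : ℝ) : 0 ≤ sg t y := by
  rw [sg]; positivity

lemma sg_le_one (t y : ℝ) : sg t y ≤ 1 := by
  rw [sg, div_le_one (E1_pos t y)]; linarith [E_pos t y]

lemma sg_mono {t : ℝ} (ht : 0 ≤ t) : Monotone (sg t) := by
  intro y z hyz
  have h1 : Real.exp (2 * t * y) ≤ Real.exp (2 * t * z) :=
    Real.exp_le_exp.2 (by nlinarith)
  rw [sg, sg, div_le_div_iff₀ (E1_pos t y) (E1_pos t z)]
  nlinarith [E_pos t y, E_pos t z]

lemma continuous_qq (t : ℝ) : Continuous (qq t) := by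
  unfold qq
  fun_prop (disch := intro x; positivity)

lemma continuous_sg (t : ℝ) : Continuous (sg t) := by
  unfold sg
  fun_prop (disch := intro x; positivity)

lemma integrable_qg (t τ : ℝ) : Integrable (fun y => qq t y * gaussPdf (y - τ)) := by
  apply Integrable.mono' (integrable_gauss_shift τ)
  · exact ((continuous_qq t).mul (continuous_gaussPdf.comp (by fun_prop))).aestronglyMeasurable
  · refine Filter.Eventually.of_forall fun y => ?_
    rw [Real.norm_eq_abs, abs_of_nonneg (mul_nonneg (qq_pos t y).le (gaussPdf_nonneg _))]
    calc qq t y * gaussPdf (y - τ) ≤ 1 * gaussPdf (y - τ) :=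
          mul_le_mul_of_nonneg_right (qq_le_one t y) (gaussPdf_nonneg _)
      _ = gaussPdf (y - τ) := one_mul _

lemma integrable_sqg (t τ : ℝ) : Integrable (fun y => sg t y * qq t y * gaussPdf (y - τ)) := by
  apply Integrable.mono' (integrable_gauss_shift τ)
  · exact (((continuous_sg t).mul (continuous_qq t)).mul
      (continuous_gaussPdf.comp (by fun_prop))).aestronglyMeasurable
  · refine Filter.Eventually.of_forall fun y => ?_
    rw [Real.norm_eq_abs, abs_of_nonneg (mul_nonneg (mul_nonneg (sg_nonneg t y) (qq_pos t y).le)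
      (gaussPdf_nonneg _))]
    calc sg t y * qq t y * gaussPdf (y - τ) ≤ 1 * 1 * gaussPdf (y - τ) := by
          apply mul_le_mul_of_nonneg_right _ (gaussPdf_nonneg _)
          exact mul_le_mul (sg_le_one t y) (qq_le_one t y) (qq_pos t y).le one_pos.le
      _ = gaussPdf (y - τ) := by ring

lemma Gg_pos (t τ : ℝ) : 0 < Gg t τ := by
  rw [Gg, integral_pos_iff_support_of_nonneg]
  · have : Function.support (fun y => qq t y * gaussPdf (y - τ)) = Set.univ := by
      apply Set.eq_univ_iff_forall.2
      intro y
      exact Function.mem_support.2 (mul_pos (qq_pos t y) (gaussPdf_pos _)).ne'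
    rw [this]
    simp
  · intro y
    exact (mul_pos (qq_pos t y) (gaussPdf_pos _)).le
  · exact integrable_qg t τ

lemma Aa_nonneg (t τ : ℝ) : 0 ≤ Aa t τ := by
  rw [Aa]
  apply integral_nonneg
  intro y
  exact mul_nonneg (mul_nonneg (sg_nonneg t y) (qq_pos t y).le) (gaussPdf_nonneg _)

lemma cheb {s ℓ u : ℝ → ℝ} (hu : ∀ y, 0 ≤ u y) (hs : Monotone s) (hl : Monotone ℓ)
    (h1 : Integrable u) (h2 : Integrable (fun y => s y * u y))
    (h3 : Integrable (fun y => ℓ y * u y)) (h4 : Integrable (fun y => s y * ℓ y * u y)) :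
    (∫ y, s y * u y) * ∫ y, ℓ y * u y ≤ (∫ y, s y * ℓ y * u y) * ∫ y, u y := by
  have key : (0:ℝ) ≤ ∫ p : ℝ × ℝ, (s p.1 - s p.2) * (ℓ p.1 - ℓ p.2) * (u p.1 * u p.2) ∂((volume : Measure ℝ).prod (volume : Measure ℝ)) := by
    apply integral_nonneg
    intro p
    have hsl : 0 ≤ (s p.1 - s p.2) * (ℓ p.1 - ℓ p.2) := by
      rcases le_total p.1 p.2 with h | h
      · have := hs h; have := hl h
        nlinarith
      · have := hs h; have := hl h
        nlinarith
    exact mul_nonneg hsl (mul_nonneg (hu _) (hu _))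
  have e1 : Integrable (fun p : ℝ × ℝ => (s p.1 * ℓ p.1 * u p.1) * u p.2) ((volume : Measure ℝ).prod (volume : Measure ℝ)) := h4.mul_prod h1
  have e2 : Integrable (fun p : ℝ × ℝ => u p.1 * (s p.2 * ℓ p.2 * u p.2)) ((volume : Measure ℝ).prod (volume : Measure ℝ)) := h1.mul_prod h4
  have e3 : Integrable (fun p : ℝ × ℝ => (s p.1 * u p.1) * (ℓ p.2 * u p.2)) ((volume : Measure ℝ).prod (volume : Measure ℝ)) := h2.mul_prod h3
  have e4 : Integrable (fun p : ℝ × ℝ => (ℓ p.1 * u p.1) * (s p.2 * u p.2)) ((volume : Measure ℝ).prod (volume : Measure ℝ)) := h3.mul_prod h2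
  have expand : ∀ p : ℝ × ℝ, (s p.1 - s p.2) * (ℓ p.1 - ℓ p.2) * (u p.1 * u p.2)
      = ((s p.1 * ℓ p.1 * u p.1) * u p.2 + u p.1 * (s p.2 * ℓ p.2 * u p.2))
        - ((s p.1 * u p.1) * (ℓ p.2 * u p.2) + (ℓ p.1 * u p.1) * (s p.2 * u p.2)) := by
    intro p; ring
  have e12 : Integrable (fun p : ℝ × ℝ => (s p.1 * ℓ p.1 * u p.1) * u p.2
      + u p.1 * (s p.2 * ℓ p.2 * u p.2)) ((volume : Measure ℝ).prod (volume : Measure ℝ)) := e1.add e2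
  have e34 : Integrable (fun p : ℝ × ℝ => (s p.1 * u p.1) * (ℓ p.2 * u p.2)
      + (ℓ p.1 * u p.1) * (s p.2 * u p.2)) ((volume : Measure ℝ).prod (volume : Measure ℝ)) := e3.add e4
  have hsplit : ∫ p : ℝ × ℝ, (((s p.1 * ℓ p.1 * u p.1) * u p.2 + u p.1 * (s p.2 * ℓ p.2 * u p.2))
        - ((s p.1 * u p.1) * (ℓ p.2 * u p.2) + (ℓ p.1 * u p.1) * (s p.2 * u p.2))) ∂((volume : Measure ℝ).prod (volume : Measure ℝ))
      = ((∫ y, s y * ℓ y * u y) * (∫ y, u y) + (∫ y, u y) * (∫ y, s y * ℓ y * u y))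
        - ((∫ y, s y * u y) * (∫ y, ℓ y * u y) + (∫ y, ℓ y * u y) * (∫ y, s y * u y)) := by
    have p1 : ∫ p : ℝ × ℝ, (s p.1 * ℓ p.1 * u p.1) * u p.2 ∂((volume : Measure ℝ).prod (volume : Measure ℝ))
        = (∫ y, s y * ℓ y * u y) * ∫ y, u y := integral_prod_mul (fun y => s y * ℓ y * u y) u
    have p2 : ∫ p : ℝ × ℝ, u p.1 * (s p.2 * ℓ p.2 * u p.2) ∂((volume : Measure ℝ).prod (volume : Measure ℝ))
        = (∫ y, u y) * ∫ y, s y * ℓ y * u y := integral_prod_mul u (fun y => s y * ℓ y * u y)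
    have p3 : ∫ p : ℝ × ℝ, (s p.1 * u p.1) * (ℓ p.2 * u p.2) ∂((volume : Measure ℝ).prod (volume : Measure ℝ))
        = (∫ y, s y * u y) * ∫ y, ℓ y * u y := integral_prod_mul (fun y => s y * u y) (fun y => ℓ y * u y)
    have p4 : ∫ p : ℝ × ℝ, (ℓ p.1 * u p.1) * (s p.2 * u p.2) ∂((volume : Measure ℝ).prod (volume : Measure ℝ))
        = (∫ y, ℓ y * u y) * ∫ y, s y * u y := integral_prod_mul (fun y => ℓ y * u y) (fun y => s y * u y)
    rw [integral_sub e12 e34, integral_add e1 e2, integral_add e3 e4, p1, p2, p3, p4]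
  rw [integral_congr_ae (Filter.Eventually.of_forall expand), hsplit] at key
  nlinarith [key]

lemma gauss_density (τ1 τ2 y : ℝ) :
    gaussPdf (y - τ2) = Real.exp ((τ1^2 - τ2^2)/2) * (Real.exp ((τ2 - τ1)*y) * gaussPdf (y - τ1)) := by
  rw [gaussPdf, gaussPdf,
    show -((y - τ2)^2)/2 = (τ1^2 - τ2^2)/2 + ((τ2 - τ1)*y + -((y - τ1)^2)/2) by ring,
    Real.exp_add, Real.exp_add]
  ring

lemma A_G_cheb {t : ℝ} (ht : 0 ≤ t) {τ1 τ2 : ℝ} (h12 : τ1 ≤ τ2) :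
    Aa t τ1 * Gg t τ2 ≤ Aa t τ2 * Gg t τ1 := by
  have hC : (0:ℝ) < Real.exp ((τ1^2 - τ2^2)/2) := Real.exp_pos _
  have hlu_eq : (fun y => Real.exp ((τ2 - τ1)*y) * (qq t y * gaussPdf (y - τ1)))
      = fun y => (Real.exp ((τ1^2 - τ2^2)/2))⁻¹ * (qq t y * gaussPdf (y - τ2)) := by
    funext y
    rw [gauss_density τ1 τ2 y]
    field_simp
  have hslu_eq : (fun y => sg t y * Real.exp ((τ2 - τ1)*y) * (qq t y * gaussPdf (y - τ1)))
      = fun y => (Real.exp ((τ1^2 - τ2^2)/2))⁻¹ * (sg t y * qq t y * gaussPdf (y - τ2)) := by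
    funext y
    rw [gauss_density τ1 τ2 y]
    field_simp
  have hsu : Integrable (fun y => sg t y * (qq t y * gaussPdf (y - τ1))) := by
    have := integrable_sqg t τ1
    simpa only [mul_assoc] using this
  have hcheb := cheb (s := sg t) (ℓ := fun y => Real.exp ((τ2 - τ1)*y))
    (u := fun y => qq t y * gaussPdf (y - τ1))
    (fun y => mul_nonneg (qq_pos t y).le (gaussPdf_nonneg _))
    (sg_mono ht)
    (fun y z hyz => Real.exp_le_exp.2 (by nlinarith))
    (integrable_qg t τ1)
    hsu
    (by rw [hlu_eq]; exact ((integrable_qg t τ2).const_mul _))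
    (by rw [hslu_eq]; exact ((integrable_sqg t τ2).const_mul _))
  have h1 : ∫ y, sg t y * (qq t y * gaussPdf (y - τ1)) = Aa t τ1 := by
    rw [Aa]; simp only [mul_assoc]
  have h2 : ∫ y, Real.exp ((τ2 - τ1)*y) * (qq t y * gaussPdf (y - τ1))
      = (Real.exp ((τ1^2 - τ2^2)/2))⁻¹ * Gg t τ2 := by
    rw [hlu_eq, Gg, MeasureTheory.integral_const_mul]
  have h3 : ∫ y, sg t y * Real.exp ((τ2 - τ1)*y) * (qq t y * gaussPdf (y - τ1))
      = (Real.exp ((τ1^2 - τ2^2)/2))⁻¹ * Aa t τ2 := by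
    rw [hslu_eq, Aa, MeasureTheory.integral_const_mul]
  have h4 : ∫ y, qq t y * gaussPdf (y - τ1) = Gg t τ1 := rfl
  rw [h1, h2, h3, h4] at hcheb
  have hfin := mul_le_mul_of_nonneg_left hcheb hC.le
  calc Aa t τ1 * Gg t τ2
      = Real.exp ((τ1^2 - τ2^2)/2) * (Aa t τ1 * ((Real.exp ((τ1^2 - τ2^2)/2))⁻¹ * Gg t τ2)) := by
        field_simp
    _ ≤ Real.exp ((τ1^2 - τ2^2)/2) * ((Real.exp ((τ1^2 - τ2^2)/2))⁻¹ * Aa t τ2 * Gg t τ1) := hfin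
    _ = Aa t τ2 * Gg t τ1 := by field_simp


lemma integrable_mul_gauss {f : ℝ → ℝ} {C : ℝ} (hc : Continuous f) (hC : ∀ z, |f z| ≤ C) :
    Integrable (fun z => f z * gaussPdf z) := by
  apply Integrable.mono' (integrable_gaussPdf.const_mul C)
  · exact (hc.mul continuous_gaussPdf).aestronglyMeasurable
  · refine Filter.Eventually.of_forall fun z => ?_
    rw [Real.norm_eq_abs, abs_mul, abs_of_nonneg (gaussPdf_nonneg z)]
    exact mul_le_mul_of_nonneg_right (hC z) (gaussPdf_nonneg z)

lemma sq_abs_le_one (t y : ℝ) : |sg t y * qq t y| ≤ 1 := by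
  rw [abs_mul, abs_of_nonneg (sg_nonneg t y), abs_of_nonneg (qq_pos t y).le]
  calc sg t y * qq t y ≤ 1 * 1 :=
        mul_le_mul (sg_le_one t y) (qq_le_one t y) (qq_pos t y).le one_pos.le
    _ = 1 := one_mul 1

lemma hasDerivAt_qq (t y : ℝ) : HasDerivAt (qq t) (-(4*t) * (sg t y * qq t y)) y := by
  have hv : HasDerivAt (fun y : ℝ => 2*t*y) (2*t) y := by
    simpa using (hasDerivAt_id y).const_mul (2*t)
  have h4 := ((hv.exp.add_const 1).inv (E1_pos t y).ne').pow 2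
  have hfun : ((fun y => Real.exp (2*t*y)+1)⁻¹)^2 = qq t := by
    funext z; rw [Pi.pow_apply, Pi.inv_apply, qq, one_div]
  rw [hfun] at h4
  refine h4.congr_deriv ?_
  simp only [Pi.inv_apply, Nat.reduceSub, pow_one, Nat.cast_ofNat]
  rw [sg, qq]
  have h := (E1_pos t y).ne'
  field_simp
  ring

lemma cont_shift (f : ℝ → ℝ) (hf : Continuous f) (x : ℝ) :
    Continuous fun z : ℝ => f (z + x) := hf.comp (by fun_prop)

lemma hasDerivAt_Gg (t τ : ℝ) : HasDerivAt (Gg t) (-(4*t) * Aa t τ) τ := by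
  have hrep : Gg t = fun x => ∫ z, qq t (z + x) * gaussPdf z := by
    funext x; rw [Gg, ← shift (fun y => qq t y) x]
  rw [hrep]
  have key := hasDerivAt_integral_of_dominated_loc_of_deriv_le (μ := volume) (x₀ := τ)
    (F := fun x z => qq t (z + x) * gaussPdf z)
    (F' := fun x z => -(4*t) * (sg t (z + x) * qq t (z + x)) * gaussPdf z)
    (bound := fun z => (4*|t|) * gaussPdf z)
    (Metric.ball_mem_nhds _ one_pos)
    (by
      refine Filter.Eventually.of_forall fun x => ?_
      exact ((cont_shift _ (continuous_qq t) x).mul continuous_gaussPdf).aestronglyMeasurable)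
    (by
      apply integrable_mul_gauss (cont_shift _ (continuous_qq t) τ)
      intro z
      rw [abs_of_nonneg (qq_pos t _).le]
      exact qq_le_one t _)
    (by
      apply Continuous.aestronglyMeasurable
      exact (continuous_const.mul ((cont_shift _ (continuous_sg t) τ).mul
        (cont_shift _ (continuous_qq t) τ))).mul continuous_gaussPdf)
    (by
      refine Filter.Eventually.of_forall fun z x _ => ?_
      rw [Real.norm_eq_abs, abs_mul, abs_of_nonneg (gaussPdf_nonneg z), abs_mul]
      have h1 : |(-(4*t))| = 4 * |t| := by rw [abs_neg, abs_mul]; norm_num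
      rw [h1]
      apply mul_le_mul_of_nonneg_right _ (gaussPdf_nonneg z)
      calc 4 * |t| * |sg t (z+x) * qq t (z+x)| ≤ 4 * |t| * 1 :=
            mul_le_mul_of_nonneg_left (sq_abs_le_one t _) (by positivity)
        _ = 4 * |t| := mul_one _)
    (integrable_gaussPdf.const_mul _)
    (by
      refine Filter.Eventually.of_forall fun z x _ => ?_
      have hcomp : HasDerivAt (fun x => qq t (z + x)) (-(4*t) * (sg t (z+x) * qq t (z+x))) x := by
        have h := (hasDerivAt_qq t (z+x)).comp x ((hasDerivAt_id x).const_add z)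
        simpa [Function.comp_def] using h
      exact hcomp.mul_const (gaussPdf z))
  have hval : ∫ z, -(4*t) * (sg t (z+τ) * qq t (z+τ)) * gaussPdf z = -(4*t) * Aa t τ := by
    rw [Aa, ← shift (fun y => sg t y * qq t y) τ, ← MeasureTheory.integral_const_mul]
    congr 1; funext z; ring
  exact hval ▸ key.2


noncomputable def Pd (t : ℝ) : ℝ :=
  ∫ z, (-(4*z+8*t)) * (sg t (z+t) * qq t (z+t)) * gaussPdf z

noncomputable def Fd (t : ℝ) : ℝ :=
  ∫ z, (-(4*(z+t))) * (sg t (z+t) * qq t (z+t)) * gaussPdf z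

lemma integrable_dom {f : ℝ → ℝ} (C : ℝ) (hc : Continuous f) (hb : ∀ z, |f z| ≤ 4*|z| + C) :
    Integrable (fun z => f z * gaussPdf z) := by
  have hint : Integrable (fun z => 4*(|z| * gaussPdf z) + C * gaussPdf z) :=
    (integrable_abs_gauss.const_mul 4).add (integrable_gaussPdf.const_mul C)
  apply Integrable.mono' hint (hc.mul continuous_gaussPdf).aestronglyMeasurable
  refine Filter.Eventually.of_forall fun z => ?_
  rw [Real.norm_eq_abs, Pi.mul_apply, abs_mul, abs_of_nonneg (gaussPdf_nonneg z)]
  have := hb z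
  have hg := gaussPdf_nonneg z
  nlinarith [abs_nonneg z, mul_le_mul_of_nonneg_right (hb z) hg]

lemma hasDerivAt_rho (t : ℝ) : HasDerivAt ρ (Pd t) t := by
  have hrep : ρ = fun x => ∫ z, qq x (z + x) * gaussPdf z := by
    funext x; rw [rho_eq, Gg, ← shift (fun y => qq x y) x]
  rw [hrep, Pd]
  have key := hasDerivAt_integral_of_dominated_loc_of_deriv_le (μ := volume) (x₀ := t)
    (F := fun x z => qq x (z + x) * gaussPdf z)
    (F' := fun x z => (-(4*z+8*x)) * (sg x (z+x) * qq x (z+x)) * gaussPdf z)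
    (bound := fun z => (4*|z| + 8*(|t|+1)) * gaussPdf z)
    (Metric.ball_mem_nhds _ one_pos)
    (by
      refine Filter.Eventually.of_forall fun x => ?_
      exact ((cont_shift _ (continuous_qq x) x).mul continuous_gaussPdf).aestronglyMeasurable)
    (by
      apply integrable_mul_gauss (cont_shift _ (continuous_qq t) t)
      intro z
      rw [abs_of_nonneg (qq_pos t _).le]
      exact qq_le_one t _)
    (by
      apply Continuous.aestronglyMeasurable
      exact ((by fun_prop : Continuous fun z : ℝ => -(4*z+8*t)).mul
        ((cont_shift _ (continuous_sg t) t).mul (cont_shift _ (continuous_qq t) t))).mul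
        continuous_gaussPdf)
    (by
      refine Filter.Eventually.of_forall fun z x hx => ?_
      rw [Real.norm_eq_abs, abs_mul, abs_of_nonneg (gaussPdf_nonneg z), abs_mul]
      apply mul_le_mul_of_nonneg_right _ (gaussPdf_nonneg z)
      have hxt : |x| ≤ |t| + 1 := by
        have h := Metric.mem_ball.1 hx
        rw [Real.dist_eq] at h
        have : |x| ≤ |x - t| + |t| := by
          calc |x| = |x - t + t| := by ring_nf
            _ ≤ |x - t| + |t| := abs_add_le _ _
        linarith
      have h1 : |(-(4*z+8*x))| ≤ 4*|z| + 8*(|t|+1) := by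
        rw [abs_neg]
        calc |4*z+8*x| ≤ |4*z| + |8*x| := abs_add_le _ _
          _ = 4*|z| + 8*|x| := by rw [abs_mul, abs_mul]; norm_num
          _ ≤ 4*|z| + 8*(|t|+1) := by linarith
      calc |(-(4*z+8*x))| * |sg x (z+x) * qq x (z+x)| ≤ (4*|z| + 8*(|t|+1)) * 1 := by
            apply mul_le_mul h1 (sq_abs_le_one x _) (abs_nonneg _) (by positivity)
        _ = 4*|z| + 8*(|t|+1) := mul_one _)
    (by
      have : (fun z => (4*|z| + 8*(|t|+1)) * gaussPdf z)
          = fun z => 4*(|z| * gaussPdf z) + (8*(|t|+1)) * gaussPdf z := by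
        funext z; ring
      rw [this]
      exact (integrable_abs_gauss.const_mul 4).add (integrable_gaussPdf.const_mul _))
    (by
      refine Filter.Eventually.of_forall fun z x _ => ?_
      have hv : HasDerivAt (fun x : ℝ => 2*x*(z+x)) (2*(z+x) + 2*x) x := by
        simpa [Function.comp_def, Pi.mul_def] using ((hasDerivAt_id x).const_mul 2).mul ((hasDerivAt_id x).const_add z)
      have h4 := ((hv.exp.add_const 1).inv (by positivity)).pow 2
      have hfun : ((fun x : ℝ => Real.exp (2*x*(z+x))+1)⁻¹)^2 = fun x => qq x (z+x) := by
        funext w; rw [Pi.pow_apply, Pi.inv_apply, qq, one_div]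
      rw [hfun] at h4
      have hq : HasDerivAt (fun x => qq x (z+x)) ((-(4*z+8*x)) * (sg x (z+x) * qq x (z+x))) x := by
        refine h4.congr_deriv ?_
        simp only [Pi.inv_apply, Nat.reduceSub, pow_one, Nat.cast_ofNat]
        rw [sg, qq]
        have h := (E1_pos x (z+x)).ne'
        field_simp
        ring
      exact hq.mul_const (gaussPdf z))
  exact key.2

lemma hasDerivAt_Fb (t : ℝ) : HasDerivAt (fun b => Gg b t) (Fd t) t := by
  have hrep : (fun b => Gg b t) = fun b => ∫ z, qq b (z + t) * gaussPdf z := by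
    funext b; rw [Gg, ← shift (fun y => qq b y) t]
  rw [hrep, Fd]
  have key := hasDerivAt_integral_of_dominated_loc_of_deriv_le (μ := volume) (x₀ := t)
    (F := fun x z => qq x (z + t) * gaussPdf z)
    (F' := fun x z => (-(4*(z+t))) * (sg x (z+t) * qq x (z+t)) * gaussPdf z)
    (bound := fun z => (4*|z| + 4*|t|) * gaussPdf z)
    (Metric.ball_mem_nhds _ one_pos)
    (by
      refine Filter.Eventually.of_forall fun x => ?_
      exact ((cont_shift _ (continuous_qq x) t).mul continuous_gaussPdf).aestronglyMeasurable)
    (by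
      apply integrable_mul_gauss (cont_shift _ (continuous_qq t) t)
      intro z
      rw [abs_of_nonneg (qq_pos t _).le]
      exact qq_le_one t _)
    (by
      apply Continuous.aestronglyMeasurable
      exact ((by fun_prop : Continuous fun z : ℝ => -(4*(z+t))).mul
        ((cont_shift _ (continuous_sg t) t).mul (cont_shift _ (continuous_qq t) t))).mul
        continuous_gaussPdf)
    (by
      refine Filter.Eventually.of_forall fun z x _ => ?_
      rw [Real.norm_eq_abs, abs_mul, abs_of_nonneg (gaussPdf_nonneg z), abs_mul]
      apply mul_le_mul_of_nonneg_right _ (gaussPdf_nonneg z)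
      have h1 : |(-(4*(z+t)))| ≤ 4*|z| + 4*|t| := by
        rw [abs_neg]
        calc |4*(z+t)| = 4 * |z+t| := by rw [abs_mul]; norm_num
          _ ≤ 4*(|z| + |t|) := by have := abs_add_le z t; linarith
          _ = 4*|z| + 4*|t| := by ring
      calc |(-(4*(z+t)))| * |sg x (z+t) * qq x (z+t)| ≤ (4*|z| + 4*|t|) * 1 := by
            apply mul_le_mul h1 (sq_abs_le_one x _) (abs_nonneg _) (by positivity)
        _ = 4*|z| + 4*|t| := mul_one _)
    (by
      have : (fun z => (4*|z| + 4*|t|) * gaussPdf z)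
          = fun z => 4*(|z| * gaussPdf z) + (4*|t|) * gaussPdf z := by
        funext z; ring
      rw [this]
      exact (integrable_abs_gauss.const_mul 4).add (integrable_gaussPdf.const_mul _))
    (by
      refine Filter.Eventually.of_forall fun z x _ => ?_
      have hv : HasDerivAt (fun x : ℝ => 2*x*(z+t)) (2*(z+t)) x := by
        simpa using ((hasDerivAt_id x).const_mul 2).mul_const (z+t)
      have h4 := ((hv.exp.add_const 1).inv (by positivity)).pow 2
      have hfun : ((fun x : ℝ => Real.exp (2*x*(z+t))+1)⁻¹)^2 = fun x => qq x (z+t) := by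
        funext w; rw [Pi.pow_apply, Pi.inv_apply, qq, one_div]
      rw [hfun] at h4
      have hq : HasDerivAt (fun x => qq x (z+t)) ((-(4*(z+t))) * (sg x (z+t) * qq x (z+t))) x := by
        refine h4.congr_deriv ?_
        simp only [Pi.inv_apply, Nat.reduceSub, pow_one, Nat.cast_ofNat]
        rw [sg, qq]
        have h := (E1_pos x (z+t)).ne'
        field_simp
        ring
      exact hq.mul_const (gaussPdf z))
  exact key.2

lemma Pd_split (t : ℝ) : Pd t = Fd t + (-(4*t) * Aa t t) := by
  have hint1 : Integrable (fun z => (-(4*(z+t))) * (sg t (z+t) * qq t (z+t)) * gaussPdf z) := by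
    apply integrable_dom (4*|t|)
    · exact (by fun_prop : Continuous fun z : ℝ => -(4*(z+t))).mul
        ((cont_shift _ (continuous_sg t) t).mul (cont_shift _ (continuous_qq t) t))
    · intro z
      rw [abs_mul, abs_neg]
      have hz : |4*(z+t)| ≤ 4*|z| + 4*|t| := by
        rw [abs_mul, show |(4:ℝ)| = 4 by norm_num]
        have := abs_add_le z t
        linarith
      have hm := mul_le_mul hz (sq_abs_le_one t (z+t))
        (abs_nonneg (sg t (z+t) * qq t (z+t))) (by positivity : (0:ℝ) ≤ 4*|z| + 4*|t|)
      linarith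
  have hint2 : Integrable (fun z => (-(4*t)) * (sg t (z+t) * qq t (z+t)) * gaussPdf z) := by
    apply integrable_mul_gauss (C := 4*|t|)
    · exact (continuous_const.mul
        ((cont_shift _ (continuous_sg t) t).mul (cont_shift _ (continuous_qq t) t)))
    · intro z
      rw [abs_mul, abs_neg, abs_mul, show |(4:ℝ)| = 4 by norm_num]
      have hm := mul_le_mul_of_nonneg_left (sq_abs_le_one t (z+t))
        (by positivity : (0:ℝ) ≤ 4*|t|)
      linarith
  have heq : (fun z => (-(4*z+8*t)) * (sg t (z+t) * qq t (z+t)) * gaussPdf z)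
      = fun z => (-(4*(z+t))) * (sg t (z+t) * qq t (z+t)) * gaussPdf z
        + (-(4*t)) * (sg t (z+t) * qq t (z+t)) * gaussPdf z := by
    funext z; ring
  rw [Pd, heq, integral_add hint1 hint2, Fd]
  congr 1
  rw [Aa, ← shift (fun y => sg t y * qq t y) t, ← MeasureTheory.integral_const_mul]
  congr 1; funext z; ring

lemma refl_int (b a : ℝ) :
    ∫ y, (sg b y)^2 * gaussPdf (y + a) = ∫ y, qq b y * gaussPdf (y - a) := by
  have h := integral_neg_eq_self (fun y => (sg b y)^2 * gaussPdf (y + a)) volume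
  rw [← h]
  refine integral_congr_ae (Filter.Eventually.of_forall fun x => ?_)
  have e1 : sg b (-x) = 1/(Real.exp (2*b*x)+1) := by
    rw [sg, show 2*b*(-x) = -(2*b*x) by ring, Real.exp_neg]
    have hE := (Real.exp_pos (2*b*x)).ne'
    field_simp
    ring
  calc (sg b (-x))^2 * gaussPdf (-x + a)
      = (1/(Real.exp (2*b*x)+1))^2 * gaussPdf (x - a) := by
        rw [e1, gaussPdf, gaussPdf, show (-x+a)^2 = (x-a)^2 by ring]
    _ = qq b x * gaussPdf (x - a) := by rw [qq]

lemma one_sub_sg (b y : ℝ) : (1 - sg b y)^2 = qq b y := by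
  rw [sg, qq]
  have h := (E1_pos b y).ne'
  field_simp
  ring

lemma bayes (t : ℝ) {δ : ℝ → ℝ} (hm : Measurable δ) (h01 : ∀ y, δ y ∈ Set.Icc (0:ℝ) 1) :
    2 * ρ t ≤ (∫ y, (1 - δ y)^2 * gaussPdf (y - t)) + ∫ y, (δ y)^2 * gaussPdf (y + t) := by
  have hmg1 : AEStronglyMeasurable (fun y => (1 - δ y)^2 * gaussPdf (y - t)) volume := by
    apply Measurable.aestronglyMeasurable
    exact ((measurable_const.sub hm).pow_const 2).mul
      (continuous_gaussPdf.measurable.comp (measurable_id.sub measurable_const))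
  have hmg2 : AEStronglyMeasurable (fun y => (δ y)^2 * gaussPdf (y + t)) volume := by
    apply Measurable.aestronglyMeasurable
    exact (hm.pow_const 2).mul
      (continuous_gaussPdf.measurable.comp (measurable_id.add measurable_const))
  have hsq1 : ∀ y, (1 - δ y)^2 ≤ 1 := by
    intro y
    have h1 := (h01 y).1; have h2 := (h01 y).2
    nlinarith
  have hsq2 : ∀ y, (δ y)^2 ≤ 1 := by
    intro y
    have h1 := (h01 y).1; have h2 := (h01 y).2
    nlinarith
  have hint1 : Integrable (fun y => (1 - δ y)^2 * gaussPdf (y - t)) := by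
    apply Integrable.mono' (integrable_gauss_shift t) hmg1
    refine Filter.Eventually.of_forall fun y => ?_
    rw [Real.norm_eq_abs, abs_of_nonneg (mul_nonneg (sq_nonneg _) (gaussPdf_nonneg _))]
    calc (1 - δ y)^2 * gaussPdf (y - t) ≤ 1 * gaussPdf (y - t) :=
          mul_le_mul_of_nonneg_right (hsq1 y) (gaussPdf_nonneg _)
      _ = gaussPdf (y - t) := one_mul _
  have hint2 : Integrable (fun y => (δ y)^2 * gaussPdf (y + t)) := by
    apply Integrable.mono' (integrable_gaussPdf.comp_add_right t) hmg2
    refine Filter.Eventually.of_forall fun y => ?_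
    rw [Real.norm_eq_abs, abs_of_nonneg (mul_nonneg (sq_nonneg _) (gaussPdf_nonneg _))]
    calc (δ y)^2 * gaussPdf (y + t) ≤ 1 * gaussPdf (y + t) :=
          mul_le_mul_of_nonneg_right (hsq2 y) (gaussPdf_nonneg _)
      _ = gaussPdf (y + t) := one_mul _
  rw [← integral_add hint1 hint2]
  have hint1' : Integrable (fun y => (1 - sg t y)^2 * gaussPdf (y - t)) := by
    have : (fun y => (1 - sg t y)^2 * gaussPdf (y - t)) = fun y => qq t y * gaussPdf (y - t) := by
      funext y; rw [one_sub_sg]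
    rw [this]; exact integrable_qg t t
  have hint2' : Integrable (fun y => (sg t y)^2 * gaussPdf (y + t)) := by
    apply Integrable.mono' (integrable_gaussPdf.comp_add_right t)
    · apply Continuous.aestronglyMeasurable
      exact (((continuous_sg t).pow 2).mul (continuous_gaussPdf.comp (by fun_prop)))
    refine Filter.Eventually.of_forall fun y => ?_
    rw [Real.norm_eq_abs, abs_of_nonneg (mul_nonneg (sq_nonneg _) (gaussPdf_nonneg _))]
    have : (sg t y)^2 ≤ 1 := by nlinarith [sg_nonneg t y, sg_le_one t y]
    calc (sg t y)^2 * gaussPdf (y + t) ≤ 1 * gaussPdf (y + t) :=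
          mul_le_mul_of_nonneg_right this (gaussPdf_nonneg _)
      _ = gaussPdf (y + t) := one_mul _
  have h2rho : 2 * ρ t
      = ∫ y, ((1 - sg t y)^2 * gaussPdf (y - t) + (sg t y)^2 * gaussPdf (y + t)) := by
    rw [integral_add hint1' hint2', refl_int t t]
    have e1 : (fun y => (1 - sg t y)^2 * gaussPdf (y - t))
        = fun y => qq t y * gaussPdf (y - t) := by
      funext y; rw [one_sub_sg]
    rw [e1]
    have : ρ t = ∫ y, qq t y * gaussPdf (y - t) := rfl
    rw [this]; ring
  rw [h2rho]
  apply integral_mono_of_nonneg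
  · exact Filter.Eventually.of_forall fun y =>
      add_nonneg (mul_nonneg (sq_nonneg _) (gaussPdf_nonneg _))
        (mul_nonneg (sq_nonneg _) (gaussPdf_nonneg _))
  · exact hint1.add hint2
  · refine Filter.Eventually.of_forall fun y => ?_
    show (1 - sg t y)^2 * gaussPdf (y - t) + (sg t y)^2 * gaussPdf (y + t)
      ≤ (1 - δ y)^2 * gaussPdf (y - t) + (δ y)^2 * gaussPdf (y + t)
    have hAB : gaussPdf (y + t) * Real.exp (2*t*y) = gaussPdf (y - t) := by
      rw [gaussPdf, gaussPdf, mul_assoc, ← Real.exp_add,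
        show -((y+t)^2)/2 + 2*t*y = -((y-t)^2)/2 by ring]
    have hδ0 := (h01 y).1
    have hδ1 := (h01 y).2
    have hE := Real.exp_pos (2*t*y)
    have hB := gaussPdf_nonneg (y + t)
    have key : (1 - δ y)^2 * gaussPdf (y - t) + (δ y)^2 * gaussPdf (y + t)
        - ((1 - sg t y)^2 * gaussPdf (y - t) + (sg t y)^2 * gaussPdf (y + t))
        = (gaussPdf (y - t) + gaussPdf (y + t)) * (δ y - sg t y)^2 := by
      rw [sg, ← hAB]
      have h := (E1_pos t y).ne'
      field_simp
      ring
    have hprod := mul_nonneg (add_nonneg (gaussPdf_nonneg (y - t)) hB)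
      (sq_nonneg (δ y - sg t y))
    linarith [key, hprod]

lemma F_min (t b : ℝ) : Gg t t ≤ Gg b t := by
  have h := bayes t (δ := sg b) (continuous_sg b).measurable
    (fun y => ⟨sg_nonneg b y, sg_le_one b y⟩)
  have e1 : (fun y => (1 - sg b y)^2 * gaussPdf (y - t))
      = fun y => qq b y * gaussPdf (y - t) := by
    funext y; rw [one_sub_sg]
  rw [e1, refl_int b t] at h
  have h1 : (∫ y, qq b y * gaussPdf (y - t)) = Gg b t := rfl
  rw [h1] at h
  have h2 : ρ t = Gg t t := rho_eq t
  linarith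

lemma foc {t : ℝ} (ht : 0 < t) (hmax : ∀ τ : ℝ, 0 ≤ τ → τ^2 * ρ τ ≤ t^2 * ρ t) :
    2 * Gg t t = 4 * t^2 * Aa t t := by
  have hd : HasDerivAt (fun τ => τ^2 * ρ τ) (2*t*ρ t + t^2*Pd t) t := by
    have h := (hasDerivAt_pow 2 t).mul (hasDerivAt_rho t)
    refine h.congr_deriv ?_
    push_cast
    ring
  have hloc : IsLocalMax (fun τ => τ^2 * ρ τ) t := by
    apply Filter.eventually_of_mem (Ioi_mem_nhds ht)
    intro τ hτ
    exact hmax τ (le_of_lt hτ)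
  have h0 := hloc.hasDerivAt_eq_zero hd
  have hF0 : Fd t = 0 := by
    apply IsLocalMin.hasDerivAt_eq_zero _ (hasDerivAt_Fb t)
    exact Filter.Eventually.of_forall (fun b => F_min t b)
  have h1 : Pd t = -(4*t) * Aa t t := by
    rw [Pd_split t, hF0]; ring
  have hrG : ρ t = Gg t t := rho_eq t
  rw [hrG, h1] at h0
  have key : t * (2 * Gg t t - 4 * t^2 * Aa t t) = 0 := by linear_combination h0
  rcases mul_eq_zero.1 key with h | h
  · exact absurd h ht.ne'
  · linarith


lemma hasDerivAt_h (t τ : ℝ) :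
    HasDerivAt (fun τ => τ^2 * Gg t τ) (2*τ*Gg t τ - 4*t*τ^2*Aa t τ) τ := by
  have h := (hasDerivAt_pow 2 τ).mul (hasDerivAt_Gg t τ)
  refine h.congr_deriv ?_
  push_cast
  ring

lemma hmono {t : ℝ} (ht : 0 < t) (hfoc : 2 * Gg t t = 4 * t^2 * Aa t t) :
    MonotoneOn (fun τ => τ^2 * Gg t τ) (Set.Icc 0 t) := by
  have hdiff : Differentiable ℝ (fun τ => τ^2 * Gg t τ) :=
    fun τ => (hasDerivAt_h t τ).differentiableAt
  apply monotoneOn_of_deriv_nonneg (convex_Icc 0 t) hdiff.continuous.continuousOn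
    hdiff.differentiableOn
  intro x hx
  rw [interior_Icc] at hx
  obtain ⟨hx0, hxt⟩ := hx
  rw [(hasDerivAt_h t x).deriv]
  have hch := A_G_cheb ht.le hxt.le
  have hGt := Gg_pos t t
  have hGx := Gg_pos t x
  have hAx := Aa_nonneg t x
  have hAt := Aa_nonneg t t
  have e1 : 4*t*x^2*(Aa t x * Gg t t) ≤ 4*t*x^2*(Aa t t * Gg t x) :=
    mul_le_mul_of_nonneg_left hch (by positivity)
  have e2 : 4*t*x^2*(Aa t t * Gg t x) ≤ 4*t^2*x*(Aa t t * Gg t x) := by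
    apply mul_le_mul_of_nonneg_right _ (mul_nonneg hAt hGx.le)
    nlinarith [mul_nonneg (mul_nonneg (by linarith : (0:ℝ) ≤ 4*t) hx0.le)
      (by linarith : (0:ℝ) ≤ t - x)]
  have e4 : 4*t^2*x*(Aa t t * Gg t x) = x*Gg t x*(2*Gg t t) := by
    linear_combination (-(x * Gg t x)) * hfoc
  have e5 : 4*t*x^2*(Aa t x * Gg t t) ≤ 2*x*Gg t x*Gg t t := by
    rw [e4] at e2; linarith
  nlinarith [e5, hGt]

lemma hanti {t c : ℝ} (ht : 0 < t) (hfoc : 2 * Gg t t = 4 * t^2 * Aa t t) :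
    AntitoneOn (fun τ => τ^2 * Gg t τ) (Set.Icc t c) := by
  have hdiff : Differentiable ℝ (fun τ => τ^2 * Gg t τ) :=
    fun τ => (hasDerivAt_h t τ).differentiableAt
  apply antitoneOn_of_deriv_nonpos (convex_Icc t c) hdiff.continuous.continuousOn
    hdiff.differentiableOn
  intro x hx
  rw [interior_Icc] at hx
  obtain ⟨htx, hxc⟩ := hx
  rw [(hasDerivAt_h t x).deriv]
  have hx0 : 0 < x := lt_trans ht htx
  have hch := A_G_cheb ht.le htx.le
  have hGt := Gg_pos t t
  have hGx := Gg_pos t x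
  have hAx := Aa_nonneg t x
  have hAt := Aa_nonneg t t
  have e1 : 4*t^2*x*(Aa t t * Gg t x) ≤ 4*t^2*x*(Aa t x * Gg t t) :=
    mul_le_mul_of_nonneg_left hch (by positivity)
  have e2 : 4*t^2*x*(Aa t x * Gg t t) ≤ 4*t*x^2*(Aa t x * Gg t t) := by
    apply mul_le_mul_of_nonneg_right _ (mul_nonneg hAx hGt.le)
    nlinarith [mul_nonneg (mul_nonneg (by linarith : (0:ℝ) ≤ 4*t) hx0.le)
      (by linarith : (0:ℝ) ≤ x - t)]
  have e4 : 4*t^2*x*(Aa t t * Gg t x) = x*Gg t x*(2*Gg t t) := by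
    linear_combination (-(x * Gg t x)) * hfoc
  have e5 : 2*x*Gg t x*Gg t t ≤ 4*t*x^2*(Aa t x * Gg t t) := by
    rw [e4] at e1; linarith
  nlinarith [e5, hGt]

lemma hworst {t c : ℝ} (ht : 0 < t) (hfoc : 2 * Gg t t = 4 * t^2 * Aa t t) (htc : t ≤ c) :
    ∀ τ, 0 ≤ τ → τ ≤ c → τ^2 * Gg t τ ≤ t^2 * Gg t t := by
  intro τ hτ0 hτc
  rcases le_total τ t with h | h
  · exact hmono ht hfoc ⟨hτ0, h⟩ ⟨ht.le, le_refl t⟩ h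
  · exact hanti (c := c) ht hfoc ⟨le_refl t, htc⟩ ⟨h, hτc⟩ h

lemma integral_gauss_shift_one (a : ℝ) : ∫ y, gaussPdf (y - a) = 1 := by
  have h : (fun y => gaussPdf (y - a)) = fun y => gaussPdf (y + (-a)) := by
    funext y; rw [sub_eq_add_neg]
  rw [h, integral_add_right_eq_self gaussPdf (-a), integral_gaussPdf]

end MMX

/-- If c ≥ τ*, the rule δ*(y) = exp(2τ*y)/(exp(2τ*y)+1) is minimax optimal for
mean square regret over τ ∈ [−c,c], with worst-case regret (τ*)²ρ(τ*). -/
theorem stmt_0 (τstar c : ℝ) (hτ0 : 0 ≤ τstar)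
    (hτmax : ∀ τ : ℝ, 0 ≤ τ → τ ^ 2 * ρ τ ≤ τstar ^ 2 * ρ τstar)
    (hc : τstar ≤ c)
    (δstar : ℝ → ℝ)
    (hδstar : ∀ y, δstar y = Real.exp (2 * τstar * y) / (Real.exp (2 * τstar * y) + 1)) :
    (∀ δ : ℝ → ℝ, Measurable δ → (∀ y, δ y ∈ Set.Icc (0 : ℝ) 1) →
      (⨆ τ : Set.Icc (-c) c, R δstar τ) ≤ ⨆ τ : Set.Icc (-c) c, R δ τ) ∧
    (⨆ τ : Set.Icc (-c) c, R δstar τ) = τstar ^ 2 * ρ τstar := by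
  classical
  have htpos : 0 < τstar := by
    rcases hτ0.lt_or_eq with h | h
    · exact h
    · exfalso
      have h1 := hτmax 1 zero_le_one
      rw [← h] at h1
      have h2 : ρ 1 ≤ 0 := by simpa using h1
      have h3 : 0 < ρ 1 := by rw [MMX.rho_eq]; exact MMX.Gg_pos 1 1
      linarith
  have hfoc := MMX.foc htpos hτmax
  have hcpos : 0 < c := lt_of_lt_of_le htpos hc
  have hmemt : τstar ∈ Set.Icc (-c) c := ⟨by linarith, hc⟩
  have hmemnt : -τstar ∈ Set.Icc (-c) c := ⟨by linarith, by linarith⟩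
  haveI : Nonempty ↥(Set.Icc (-c) c) := ⟨⟨τstar, hmemt⟩⟩
  have hRpos : ∀ τ : ℝ, 0 ≤ τ → R δstar τ = τ^2 * MMX.Gg τstar τ := by
    intro τ hτ
    rw [R, if_pos hτ, MMX.Gg]
    congr 1
    refine integral_congr_ae (Filter.Eventually.of_forall fun y => ?_)
    show (1 - δstar y)^2 * gaussPdf (y - τ) = MMX.qq τstar y * gaussPdf (y - τ)
    rw [hδstar y, MMX.qq]
    congr 1
    have hE := (MMX.E1_pos τstar y).ne'
    field_simp
    ring
  have hRneg : ∀ τ : ℝ, τ < 0 → R δstar τ = τ^2 * MMX.Gg τstar (-τ) := by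
    intro τ hτ
    rw [R, if_neg (not_le.2 hτ)]
    congr 1
    have e0 : (fun y => ((0:ℝ) - δstar y)^2 * gaussPdf (y - τ))
        = fun y => (MMX.sg τstar y)^2 * gaussPdf (y + (-τ)) := by
      funext y
      rw [hδstar y, zero_sub, neg_sq, sub_eq_add_neg, MMX.sg]
    rw [e0, MMX.refl_int τstar (-τ), MMX.Gg]
  have hub : ∀ p : ↥(Set.Icc (-c) c), R δstar ↑p ≤ τstar^2 * ρ τstar := by
    rintro ⟨τ, hτl, hτr⟩
    show R δstar τ ≤ τstar^2 * ρ τstar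
    rw [MMX.rho_eq]
    rcases le_or_gt 0 τ with h | h
    · rw [hRpos τ h]
      exact MMX.hworst htpos hfoc hc τ h hτr
    · rw [hRneg τ h]
      have h2 := MMX.hworst htpos hfoc hc (-τ) (by linarith) (by linarith)
      have h3 : (-τ)^2 = τ^2 := by ring
      rw [h3] at h2
      exact h2
  have heq : (⨆ τ : Set.Icc (-c) c, R δstar τ) = τstar^2 * ρ τstar := by
    apply le_antisymm (ciSup_le hub)
    have hRt : R δstar τstar = τstar^2 * ρ τstar := by
      rw [hRpos τstar hτ0, MMX.rho_eq]
    calc τstar^2 * ρ τstar = R δstar ↑(⟨τstar, hmemt⟩ : ↥(Set.Icc (-c) c)) := hRt.symm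
      _ ≤ ⨆ τ : Set.Icc (-c) c, R δstar ↑τ :=
          le_ciSup (f := fun τ : ↥(Set.Icc (-c) c) => R δstar ↑τ)
            ⟨τstar^2 * ρ τstar, by rintro _ ⟨p, rfl⟩; exact hub p⟩ ⟨τstar, hmemt⟩
  refine ⟨?_, heq⟩
  intro δ hδm hδ01
  rw [heq]
  have hbdd : BddAbove (Set.range fun p : ↥(Set.Icc (-c) c) => R δ ↑p) := by
    refine ⟨c^2, ?_⟩
    rintro _ ⟨⟨τ, hτl, hτr⟩, rfl⟩
    show R δ τ ≤ c^2
    rw [R]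
    have hι : ∀ y, ((if 0 ≤ τ then (1:ℝ) else 0) - δ y)^2 ≤ 1 := by
      intro y
      have h1 := (hδ01 y).1
      have h2 := (hδ01 y).2
      split_ifs <;> nlinarith
    have hmono : (∫ y, ((if 0 ≤ τ then (1:ℝ) else 0) - δ y)^2 * gaussPdf (y - τ)) ≤ 1 := by
      have hle := MeasureTheory.integral_mono_of_nonneg
        (f := fun y => ((if 0 ≤ τ then (1:ℝ) else 0) - δ y)^2 * gaussPdf (y - τ))
        (g := fun y => gaussPdf (y - τ))
        (Filter.Eventually.of_forall fun y => mul_nonneg (sq_nonneg _) (MMX.gaussPdf_nonneg _))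
        (MMX.integrable_gauss_shift τ)
        (Filter.Eventually.of_forall fun y => by
          calc ((if 0 ≤ τ then (1:ℝ) else 0) - δ y)^2 * gaussPdf (y - τ)
              ≤ 1 * gaussPdf (y - τ) :=
                mul_le_mul_of_nonneg_right (hι y) (MMX.gaussPdf_nonneg _)
            _ = gaussPdf (y - τ) := one_mul _)
      rw [MMX.integral_gauss_shift_one τ] at hle
      exact hle
    have hτsq : τ^2 ≤ c^2 := by nlinarith
    have hfin := mul_le_mul_of_nonneg_left hmono (sq_nonneg τ)
    rw [mul_one] at hfin
    linarith
  have h1 : R δ τstar ≤ ⨆ τ : Set.Icc (-c) c, R δ ↑τ :=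
    le_ciSup (f := fun τ : ↥(Set.Icc (-c) c) => R δ ↑τ) hbdd ⟨τstar, hmemt⟩
  have h2 : R δ (-τstar) ≤ ⨆ τ : Set.Icc (-c) c, R δ ↑τ :=
    le_ciSup (f := fun τ : ↥(Set.Icc (-c) c) => R δ ↑τ) hbdd ⟨-τstar, hmemnt⟩
  have hbayes := MMX.bayes τstar hδm hδ01
  have hR1 : R δ τstar = τstar^2 * ∫ y, (1 - δ y)^2 * gaussPdf (y - τstar) := by
    rw [R, if_pos hτ0]
  have hR2 : R δ (-τstar) = τstar^2 * ∫ y, (δ y)^2 * gaussPdf (y + τstar) := by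
    rw [R, if_neg (by linarith : ¬ (0:ℝ) ≤ -τstar)]
    rw [show (-τstar)^2 = τstar^2 by ring]
    congr 1
    refine integral_congr_ae (Filter.Eventually.of_forall fun y => ?_)
    show ((0:ℝ) - δ y)^2 * gaussPdf (y - -τstar) = (δ y)^2 * gaussPdf (y + τstar)
    rw [zero_sub, neg_sq, sub_neg_eq_add]
  have hmul := mul_le_mul_of_nonneg_left hbayes (sq_nonneg τstar)
  have hsum : τstar^2 * ((∫ y, (1 - δ y)^2 * gaussPdf (y - τstar))
        + ∫ y, (δ y)^2 * gaussPdf (y + τstar))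
      = R δ τstar + R δ (-τstar) := by rw [hR1, hR2]; ring
  linarith
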